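/- Let ζ ∈ (0, 1/2) and τ ∈ ℝ. Let Z : (τ, ∞) → ℝ be a nonnegative measurable function with Z ∈ L²(τ, ∞), and suppose there exist C > 0 and t₀ ≥ τ such that ∫_t^{∞} Z(s)² ds ≤ C·Z(t)^{1/(1−ζ)} for almost every t ≥ t₀. Then Z ∈ L¹(t₀, ∞), i.e. ∫_{t₀}^{∞} Z(t) dt < ∞. -/

import Mathlib

open MeasureTheory Set Real

set_option maxHeartbeats 2000000 in
/-- Łojasiewicz-type integrability upgrade: if `Z ≥ 0` is measurable, square integrable on
`(τ, ∞)`, and `∫_t^∞ Z(s)² ds ≤ C Z(t)^{1/(1-ζ)}` for a.e. `t ≥ t₀` with `ζ ∈ (0, 1/2)`,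
then `Z ∈ L¹(t₀, ∞)`. -/
theorem integrable_of_lojasiewicz (ζ τ : ℝ) (hζ : ζ ∈ Set.Ioo (0 : ℝ) (1 / 2))
    (Z : ℝ → ℝ) (hmeas : Measurable Z) (hZ : ∀ s ∈ Ioi τ, 0 ≤ Z s)
    (hL2 : IntegrableOn (fun s => Z s ^ 2) (Ioi τ))
    (C t₀ : ℝ) (hC : 0 < C) (ht₀ : τ ≤ t₀)
    (hkey : ∀ᵐ t ∂(volume : Measure ℝ),
      t₀ ≤ t → ∫ s in Ioi t, Z s ^ 2 ≤ C * Z t ^ (1 / (1 - ζ))) :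
    IntegrableOn Z (Ioi t₀) := by
  obtain ⟨hζ0, hζ2⟩ := hζ
  set β : ℝ := 2 * (1 - ζ) with hβ_def
  have hβ1 : 1 < β := by simp only [hβ_def]; linarith
  have hβ2 : β < 2 := by simp only [hβ_def]; linarith
  have hβ0 : (0:ℝ) < β := by linarith
  set α : ℝ := 1 / (β - 1) with hα_def
  have hα1 : 1 < α := by
    rw [hα_def]; rw [lt_div_iff₀ (by linarith)]; linarith
  have hα0 : (0:ℝ) < α := by linarith
  have hαβ' : α * (β - 1) = 1 := by
    rw [hα_def]; exact one_div_mul_cancel (by linarith)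
  have hαβ : α + 1 = α * β := by linear_combination -hαβ'
  set t₁ : ℝ := max t₀ 1 with ht₁_def
  have ht₀1 : t₀ ≤ t₁ := le_max_left _ _
  have ht₁1 : (1:ℝ) ≤ t₁ := le_max_right _ _
  have ht₁0 : (0:ℝ) < t₁ := by linarith
  have hτ1 : τ ≤ t₁ := le_trans ht₀ ht₀1
  set φ : ℝ → ℝ := fun t => ∫ s in Ioi t, Z s ^ 2 with hφ_def
  have hφ0 : ∀ t, 0 ≤ φ t := by
    intro t
    exact setIntegral_nonneg measurableSet_Ioi fun s _ => sq_nonneg _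
  have hL2' : ∀ a, τ ≤ a → IntegrableOn (fun s => Z s ^ 2) (Ioi a) :=
    fun a ha => hL2.mono_set (Ioi_subset_Ioi ha)
  have hφanti : ∀ a b : ℝ, τ ≤ a → a ≤ b → φ b ≤ φ a := by
    intro a b ha hab
    refine setIntegral_mono_set (hL2' a ha)
      (Filter.Eventually.of_forall fun s => sq_nonneg _)
      (HasSubset.Subset.eventuallyLE (Ioi_subset_Ioi hab))
  have hIocφ : ∀ a b : ℝ, τ ≤ a → ∫ s in Ioc a b, Z s ^ 2 ≤ φ a := by
    intro a b ha
    refine setIntegral_mono_set (hL2' a ha)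
      (Filter.Eventually.of_forall fun s => sq_nonneg _)
      (HasSubset.Subset.eventuallyLE Ioc_subset_Ioi_self)
  -- integrability of Z on bounded intervals
  have hZint : ∀ a b : ℝ, τ ≤ a → IntegrableOn Z (Ioc a b) := by
    intro a b ha
    have hg : IntegrableOn (fun s => 1 + Z s ^ 2) (Ioc a b) :=
      (integrableOn_const measure_Ioc_lt_top.ne).add
        ((hL2' a ha).mono_set Ioc_subset_Ioi_self)
    refine Integrable.mono' hg hmeas.aestronglyMeasurable.restrict ?_
    refine (ae_restrict_iff' measurableSet_Ioc).2
      (Filter.Eventually.of_forall fun s hs => ?_)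
    have h0 : 0 ≤ Z s := hZ s (lt_of_le_of_lt ha hs.1)
    rw [Real.norm_eq_abs, abs_of_nonneg h0]
    nlinarith [sq_nonneg (Z s - 1)]
  -- key recursion inequality
  have hrec : ∀ a b : ℝ, t₁ ≤ a → a ≤ b → (b - a) * (φ b / C) ^ β ≤ φ a := by
    intro a b h1a hab
    have hτa : τ ≤ a := le_trans hτ1 h1a
    have hc0 : 0 ≤ φ b / C := div_nonneg (hφ0 b) hC.le
    have hae : ∀ᵐ t ∂(volume.restrict (Ioc a b)),
        (fun _ => (φ b / C) ^ β) t ≤ (fun t => Z t ^ 2) t := by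
      rw [ae_restrict_iff' measurableSet_Ioc]
      filter_upwards [hkey] with t hk ht
      have ht0 : t₀ ≤ t := le_trans (le_trans ht₀1 h1a) ht.1.le
      have hτt : τ < t := lt_of_le_of_lt hτa ht.1
      have hZt : 0 ≤ Z t := hZ t hτt
      have h1 : φ b ≤ C * Z t ^ (1 / (1 - ζ)) :=
        le_trans (hφanti t b hτt.le ht.2) (hk ht0)
      have h2 : φ b / C ≤ Z t ^ (1 / (1 - ζ)) := by
        rw [div_le_iff₀ hC]; linarith
      have h3 : (φ b / C) ^ (1 - ζ) ≤ Z t := by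
        calc (φ b / C) ^ (1 - ζ) ≤ (Z t ^ (1 / (1 - ζ))) ^ (1 - ζ) :=
              Real.rpow_le_rpow hc0 h2 (by linarith)
          _ = Z t ^ ((1 / (1 - ζ)) * (1 - ζ)) := (Real.rpow_mul hZt _ _).symm
          _ = Z t := by
              rw [one_div_mul_cancel (by linarith : (1:ℝ) - ζ ≠ 0), Real.rpow_one]
      have h4 : (φ b / C) ^ β = ((φ b / C) ^ (1 - ζ)) ^ 2 := by
        rw [← Real.rpow_natCast ((φ b / C) ^ (1 - ζ)) 2, ← Real.rpow_mul hc0]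
        norm_num [hβ_def]; ring_nf
      rw [h4]
      exact pow_le_pow_left₀ (Real.rpow_nonneg hc0 _) h3 2
    have hconst : IntegrableOn (fun _ => (φ b / C) ^ β) (Ioc a b) :=
      integrableOn_const measure_Ioc_lt_top.ne
    have hint : ∫ _t in Ioc a b, (φ b / C) ^ β ≤ ∫ t in Ioc a b, Z t ^ 2 :=
      integral_mono_ae hconst ((hL2' a hτa).mono_set Ioc_subset_Ioi_self) hae
    have hval : ∫ _t in Ioc a b, (φ b / C) ^ β = (b - a) * (φ b / C) ^ β := by
      rw [setIntegral_const, Real.volume_real_Ioc_of_le hab]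
      simp [smul_eq_mul]
    rw [← hval]
    exact le_trans hint (hIocφ a b hτa)
  set T : ℕ → ℝ := fun k => t₁ * 2 ^ k with hT_def
  have hT0 : ∀ k, 0 < T k := fun k => by positivity
  have hTmono : ∀ k, T k ≤ T (k+1) := by
    intro k
    simp only [hT_def]
    have : (2:ℝ)^k ≤ 2^(k+1) := by
      apply pow_le_pow_right₀ one_le_two (Nat.le_succ k)
    nlinarith
  have hT1 : ∀ k, t₁ ≤ T k := by
    intro k
    simp only [hT_def]
    have : (1:ℝ) ≤ 2^k := one_le_pow₀ one_le_two
    nlinarith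
  have hTsucc : ∀ k, T (k+1) = 2 * T k := by
    intro k; simp only [hT_def]; ring
  set K : ℝ := max (φ t₁ * t₁ ^ α) ((C * 2 ^ α) ^ (β / (β - 1))) with hK_def
  have hK0 : 0 < K := by
    apply lt_of_lt_of_le _ (le_max_right _ _)
    positivity
  -- the decay estimate
  have hdecay : ∀ k : ℕ, φ (T k) ≤ K * (T k) ^ (-α) := by
    intro k
    induction k with
    | zero =>
      have hT0eq : T 0 = t₁ := by simp [hT_def]
      rw [hT0eq]
      have h1 : φ t₁ * t₁ ^ α ≤ K := le_max_left _ _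
      have h2 : (0:ℝ) < t₁ ^ (-α) := Real.rpow_pos_of_pos ht₁0 _
      calc φ t₁ = φ t₁ * t₁ ^ α * t₁ ^ (-α) := by
            rw [mul_assoc, ← Real.rpow_add ht₁0]; simp
        _ ≤ K * t₁ ^ (-α) := mul_le_mul_of_nonneg_right h1 h2.le
    | succ k ih =>
      set u : ℝ := φ (T (k + 1)) with hu_def
      have hu0 : 0 ≤ u := hφ0 _
      have huc0 : 0 ≤ u / C := div_nonneg hu0 hC.le
      have h1 : T k * (u / C) ^ β ≤ K * T k ^ (-α) := by
        have hd : T (k + 1) - T k = T k := by rw [hTsucc]; ring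
        calc T k * (u / C) ^ β = (T (k + 1) - T k) * (u / C) ^ β := by rw [hd]
          _ ≤ φ (T k) := hrec (T k) (T (k + 1)) (hT1 k) (hTmono k)
          _ ≤ K * T k ^ (-α) := ih
      have h2 : (u / C) ^ β ≤ K * T k ^ (-(α * β)) := by
        have e : K * T k ^ (-α) = (K * T k ^ (-(α * β))) * T k := by
          rw [mul_assoc]
          congr 1
          rw [← Real.rpow_add_one (hT0 k).ne' (-(α * β))]
          congr 1
          linarith [hαβ]
        rw [e] at h1
        exact le_of_mul_le_mul_right (by linarith [h1]) (hT0 k)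
      have h3 : u / C ≤ K ^ (1 / β) * T k ^ (-α) := by
        have e1 : u / C = ((u / C) ^ β) ^ (1 / β) := by
          rw [← Real.rpow_mul huc0, mul_one_div_cancel hβ0.ne', Real.rpow_one]
        have e2 : (K * T k ^ (-(α * β))) ^ (1 / β) = K ^ (1 / β) * T k ^ (-α) := by
          rw [Real.mul_rpow hK0.le (Real.rpow_nonneg (hT0 k).le _),
            ← Real.rpow_mul (hT0 k).le]
          congr 2
          field_simp
        rw [e1, ← e2]
        exact Real.rpow_le_rpow (Real.rpow_nonneg huc0 _) h2
          (by positivity)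
      have h4 : u ≤ C * K ^ (1 / β) * T k ^ (-α) := by
        rw [div_le_iff₀ hC] at h3
        calc u ≤ K ^ (1 / β) * T k ^ (-α) * C := h3
          _ = C * K ^ (1 / β) * T k ^ (-α) := by ring
      have h5 : T k ^ (-α) = 2 ^ α * T (k + 1) ^ (-α) := by
        rw [hTsucc k, Real.mul_rpow (by norm_num) (hT0 k).le,
          ← mul_assoc, ← Real.rpow_add (by norm_num : (0:ℝ) < 2)]
        simp
      have h6 : C * 2 ^ α * K ^ (1 / β) ≤ K := by
        have hKL : (C * 2 ^ α) ^ (β / (β - 1)) ≤ K := le_max_right _ _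
        have h7 : C * 2 ^ α ≤ K ^ ((β - 1) / β) := by
          calc C * 2 ^ α
              = ((C * 2 ^ α) ^ (β / (β - 1))) ^ ((β - 1) / β) := by
                rw [← Real.rpow_mul (by positivity)]
                have he : β / (β - 1) * ((β - 1) / β) = 1 := by
                  have hb1 : β - 1 ≠ 0 := by linarith
                  field_simp
                rw [he, Real.rpow_one]
            _ ≤ K ^ ((β - 1) / β) := Real.rpow_le_rpow (by positivity) hKL
                (le_of_lt (div_pos (by linarith) hβ0))
        calc C * 2 ^ α * K ^ (1 / β) ≤ K ^ ((β - 1) / β) * K ^ (1 / β) :=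
              mul_le_mul_of_nonneg_right h7 (Real.rpow_nonneg hK0.le _)
          _ = K := by
              rw [← Real.rpow_add hK0]
              rw [← add_div, sub_add_cancel, div_self hβ0.ne', Real.rpow_one]
      calc u ≤ C * K ^ (1 / β) * T k ^ (-α) := h4
        _ = C * 2 ^ α * K ^ (1 / β) * T (k + 1) ^ (-α) := by rw [h5]; ring
        _ ≤ K * T (k + 1) ^ (-α) :=
            mul_le_mul_of_nonneg_right h6 (Real.rpow_nonneg (hT0 _).le _)
  -- per-piece integral bound
  have hpiece : ∀ k : ℕ, ∫ t in Ioc (T k) (T (k+1)), Z t ≤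
      K ^ ((1:ℝ)/2) * (T k) ^ ((1 - α)/2) := by
    intro k
    have hτT : τ ≤ T k := le_trans hτ1 (hT1 k)
    set A : ℝ := K ^ ((1:ℝ)/2) with hA_def
    set Q : ℝ := (T k) ^ (-(1 + α)/2) with hQ_def
    set P : ℝ := (T k) ^ ((1 - α)/2) with hP_def
    have hA0 : 0 < A := Real.rpow_pos_of_pos hK0 _
    have hQ0 : 0 < Q := Real.rpow_pos_of_pos (hT0 k) _
    have hP0 : 0 < P := Real.rpow_pos_of_pos (hT0 k) _
    have hAA : A * A = K := by
      rw [hA_def, ← Real.rpow_add hK0]; norm_num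
    have hTQ : T k * Q = P := by
      rw [hQ_def, hP_def, mul_comm, ← Real.rpow_add_one (hT0 k).ne']
      congr 1; ring
    have hR : (T k) ^ (-α) = P * Q := by
      rw [hQ_def, hP_def, ← Real.rpow_add (hT0 k)]
      congr 1; ring
    set ε : ℝ := A * Q with hε_def
    have hε0 : 0 < ε := mul_pos hA0 hQ0
    have h2ε' : (0:ℝ) < 2 * ε := by linarith
    have hZ2int : IntegrableOn (fun s => Z s ^ 2) (Ioc (T k) (T (k+1))) :=
      (hL2' _ hτT).mono_set Ioc_subset_Ioi_self
    have hconst : IntegrableOn (fun _ => ε / 2) (Ioc (T k) (T (k+1))) :=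
      integrableOn_const measure_Ioc_lt_top.ne
    have hmul : IntegrableOn (fun t => (1/(2*ε)) * Z t ^ 2) (Ioc (T k) (T (k+1))) :=
      hZ2int.const_mul _
    have hae2 : ∀ᵐ t ∂(volume.restrict (Ioc (T k) (T (k+1)))),
        Z t ≤ (fun t => ε / 2 + (1/(2*ε)) * Z t ^ 2) t := by
      rw [ae_restrict_iff' measurableSet_Ioc]
      refine Filter.Eventually.of_forall fun t ht => ?_
      have hZt : 0 ≤ Z t := hZ t (lt_of_le_of_lt hτT ht.1)
      have h2ε : (0:ℝ) < 2 * ε := by linarith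
      have key : Z t * (2*ε) ≤ (ε / 2 + (1/(2*ε)) * Z t ^ 2) * (2*ε) := by
        have hcc : (1/(2*ε)) * Z t ^ 2 * (2*ε) = Z t ^ 2 := by field_simp
        nlinarith [sq_nonneg (Z t - ε)]
      exact le_of_mul_le_mul_right key h2ε
    have hle : ∫ t in Ioc (T k) (T (k+1)), Z t ≤
        ∫ t in Ioc (T k) (T (k+1)), (ε / 2 + (1/(2*ε)) * Z t ^ 2) :=
      integral_mono_ae (hZint _ _ hτT) (hconst.add hmul) hae2
    have heval : ∫ t in Ioc (T k) (T (k+1)), (ε / 2 + (1/(2*ε)) * Z t ^ 2) =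
        T k * (ε / 2) + (1/(2*ε)) * ∫ t in Ioc (T k) (T (k+1)), Z t ^ 2 := by
      rw [integral_add hconst hmul, integral_const_mul, setIntegral_const,
        Real.volume_real_Ioc_of_le (hTmono k),
        smul_eq_mul, hTsucc k]
      ring
    have hφbound : ∫ t in Ioc (T k) (T (k+1)), Z t ^ 2 ≤ K * T k ^ (-α) :=
      le_trans (hIocφ _ _ hτT) (hdecay k)
    have hfinal : T k * (ε / 2) + (1/(2*ε)) * (K * T k ^ (-α)) = A * P := by
      have e1 : T k * (ε / 2) = A * P / 2 := by
        rw [hε_def, ← hTQ]; ring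
      have e2 : (1/(2*ε)) * (K * T k ^ (-α)) = A * P / 2 := by
        rw [hR, ← hAA, hε_def, one_div, inv_mul_eq_div,
          div_eq_div_iff (mul_ne_zero (two_ne_zero) (mul_pos hA0 hQ0).ne')
            (two_ne_zero : (2:ℝ) ≠ 0)]
        ring
      rw [e1, e2]; ring
    calc ∫ t in Ioc (T k) (T (k+1)), Z t
        ≤ T k * (ε / 2) + (1/(2*ε)) * ∫ t in Ioc (T k) (T (k+1)), Z t ^ 2 := by
          rw [← heval]; exact hle
      _ ≤ T k * (ε / 2) + (1/(2*ε)) * (K * T k ^ (-α)) :=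
          add_le_add_right (mul_le_mul_of_nonneg_left hφbound (one_div_pos.2 h2ε').le) _
      _ = A * P := hfinal
  -- summing the pieces
  set r : ℝ := 2 ^ ((1 - α)/2) with hr_def
  have hr0 : 0 < r := by positivity
  have hr1 : r < 1 := by
    rw [hr_def]
    apply rpow_lt_one_of_one_lt_of_neg one_lt_two
    linarith
  set A' : ℝ := K ^ ((1:ℝ)/2) * t₁ ^ ((1 - α)/2) with hA'_def
  have hA'0 : 0 ≤ A' := by positivity
  set M : ℝ := A' * (1 - r)⁻¹ with hM_def
  have h1r : (0:ℝ) < 1 - r := by linarith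
  have hpiece' : ∀ k : ℕ, ∫ t in Ioc (T k) (T (k+1)), Z t ≤ A' * r ^ k := by
    intro k
    refine le_trans (hpiece k) (le_of_eq ?_)
    rw [hA'_def, hr_def]
    simp only [hT_def]
    rw [Real.mul_rpow ht₁0.le (by positivity)]
    rw [← Real.rpow_natCast (2:ℝ) k, ← Real.rpow_mul (by norm_num),
      mul_comm ((k:ℝ)) ((1 - α)/2), Real.rpow_mul (by norm_num : (0:ℝ) ≤ 2),
      Real.rpow_natCast]
    ring
  have hIcc : ∀ n : ℕ, IntervalIntegrable Z volume t₁ (T n) := fun n =>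
    (intervalIntegrable_iff_integrableOn_Ioc_of_le (hT1 n)).2 (hZint _ _ hτ1)
  have hII : ∀ k : ℕ, IntervalIntegrable Z volume (T k) (T (k+1)) := fun k =>
    (intervalIntegrable_iff_integrableOn_Ioc_of_le (hTmono k)).2
      (hZint _ _ (le_trans hτ1 (hT1 k)))
  have hS : ∀ n : ℕ, ∫ t in t₁..(T n), Z t ≤ A' * ∑ k ∈ Finset.range n, r ^ k := by
    intro n
    induction n with
    | zero => simp [hT_def]
    | succ n ih =>
      rw [← intervalIntegral.integral_add_adjacent_intervals (hIcc n) (hII n),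
        Finset.sum_range_succ, mul_add]
      refine add_le_add ih ?_
      rw [intervalIntegral.integral_of_le (hTmono n)]
      exact hpiece' n
  have hgeom : ∀ n : ℕ, ∑ k ∈ Finset.range n, r ^ k ≤ (1 - r)⁻¹ := by
    intro n
    calc ∑ k ∈ Finset.range n, r ^ k = (1 - r ^ n) / (1 - r) := by
          rw [geom_sum_eq hr1.ne, div_eq_div_iff (sub_ne_zero.2 hr1.ne) h1r.ne']
          ring
      _ ≤ 1 / (1 - r) :=
          div_le_div₀ zero_le_one (by nlinarith [pow_nonneg hr0.le n]) h1r le_rfl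
      _ = (1 - r)⁻¹ := one_div _
  have hsum : ∀ n : ℕ, ∫ t in t₁..(T n), Z t ≤ M := fun n =>
    le_trans (hS n) (mul_le_mul_of_nonneg_left (hgeom n) hA'0)
  -- integrability on Ioi t₁
  have hIoi : IntegrableOn Z (Ioi t₁) := by
    refine integrableOn_Ioi_of_intervalIntegral_norm_bounded (b := T) (l := Filter.atTop) M t₁
      (fun n => hZint t₁ (T n) hτ1) ?_ ?_
    · simp only [hT_def]
      exact (tendsto_pow_atTop_atTop_of_one_lt one_lt_two).const_mul_atTop ht₁0
    · filter_upwards with n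
      have : ∫ x in t₁..(T n), ‖Z x‖ = ∫ x in t₁..(T n), Z x := by
        rw [intervalIntegral.integral_of_le (hT1 n),
          intervalIntegral.integral_of_le (hT1 n)]
        refine setIntegral_congr_fun measurableSet_Ioc fun x hx => ?_
        exact norm_of_nonneg (hZ x (lt_of_le_of_lt hτ1 hx.1))
      rw [this]; exact hsum n
  have : Ioc t₀ t₁ ∪ Ioi t₁ = Ioi t₀ := Ioc_union_Ioi_eq_Ioi ht₀1
  rw [← this]
  exact (hZint t₀ t₁ ht₀).union hIoi
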